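/- Let T = S[v;σ,δ] be an Ore extension of a noetherian ring S, and let P be a prime ideal of T. Then P ∩ S need not be prime in general, but if σ = id then P ∩ S is a δ-invariant ideal of S; moreover in characteristic 0, for T = S[v;δ] a differential operator ring over a noetherian ℚ-algebra S, the contraction Q ∩ S of any prime Q of T is a δ-invariant prime ideal of S. -/

import Mathlib

namespace ContractionAux

variable {S : Type*} [Ring S]

/-- Product of two two-sided ideals. -/
def mulT (A B : TwoSidedIdeal S) : TwoSidedIdeal S :=
  TwoSidedIdeal.mk'
    (AddSubgroup.closure {z : S | ∃ a ∈ A, ∃ b ∈ B, z = a * b} : AddSubgroup S)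
    (AddSubgroup.zero_mem _)
    (fun hx hy => AddSubgroup.add_mem _ hx hy)
    (fun hx => AddSubgroup.neg_mem _ hx)
    (fun {x y} hy => by
      refine AddSubgroup.closure_induction
        (fun z hz => ?_) (by simpa using AddSubgroup.zero_mem _)
        (fun z w _ _ hz hw => by
          rw [mul_add]; exact AddSubgroup.add_mem _ hz hw)
        (fun z _ hz => by rw [mul_neg]; exact AddSubgroup.neg_mem _ hz) hy
      · obtain ⟨a, ha, b, hb, rfl⟩ := hz
        exact AddSubgroup.subset_closure ⟨x * a, A.mul_mem_left _ _ ha, b, hb, (mul_assoc ..).symm⟩)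
    (fun {x y} hx => by
      refine AddSubgroup.closure_induction
        (fun z hz => ?_) (by simpa using AddSubgroup.zero_mem _)
        (fun z w _ _ hz hw => by
          rw [add_mul]; exact AddSubgroup.add_mem _ hz hw)
        (fun z _ hz => by rw [neg_mul]; exact AddSubgroup.neg_mem _ hz) hx
      · obtain ⟨a, ha, b, hb, rfl⟩ := hz
        exact AddSubgroup.subset_closure ⟨a, ha, b * y, B.mul_mem_right _ _ hb, mul_assoc ..⟩)

lemma mem_mulT_of {A B : TwoSidedIdeal S} {a b : S} (ha : a ∈ A) (hb : b ∈ B) :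
    a * b ∈ mulT A B := by
  rw [mulT, TwoSidedIdeal.mem_mk']
  exact AddSubgroup.subset_closure ⟨a, ha, b, hb, rfl⟩

lemma mulT_le {A B J : TwoSidedIdeal S} (h : ∀ a ∈ A, ∀ b ∈ B, a * b ∈ J) :
    mulT A B ≤ J := by
  intro x hx
  rw [mulT, TwoSidedIdeal.mem_mk'] at hx
  refine AddSubgroup.closure_induction (fun z hz => ?_) J.zero_mem
    (fun z w _ _ hz hw => J.add_mem hz hw) (fun z _ hz => J.neg_mem hz) hx
  obtain ⟨a, ha, b, hb, rfl⟩ := hz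
  exact h a ha b hb

lemma mulT_mono {A A' B B' : TwoSidedIdeal S} (h1 : A ≤ A') (h2 : B ≤ B') :
    mulT A B ≤ mulT A' B' :=
  mulT_le fun a ha b hb => mem_mulT_of (h1 ha) (h2 hb)

lemma mulT_assoc_le {A B C : TwoSidedIdeal S} : mulT A (mulT B C) ≤ mulT (mulT A B) C := by
  refine mulT_le fun a ha m hm => ?_
  rw [mulT, TwoSidedIdeal.mem_mk'] at hm
  refine AddSubgroup.closure_induction (fun z hz => ?_)
    (by rw [mul_zero]; exact (mulT (mulT A B) C).zero_mem)
    (fun z w _ _ hz hw => by rw [mul_add]; exact (mulT (mulT A B) C).add_mem hz hw)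
    (fun z _ hz => by rw [mul_neg]; exact (mulT (mulT A B) C).neg_mem hz) hm
  obtain ⟨b, hb, c, hc, rfl⟩ := hz
  rw [← mul_assoc]
  exact mem_mulT_of (mem_mulT_of ha hb) hc

/-- Product of a list of two-sided ideals. -/
def listProd (L : List (TwoSidedIdeal S)) : TwoSidedIdeal S := L.foldr mulT ⊤

@[simp] lemma listProd_nil : listProd ([] : List (TwoSidedIdeal S)) = ⊤ := rfl

@[simp] lemma listProd_cons (P : TwoSidedIdeal S) (L : List (TwoSidedIdeal S)) :
    listProd (P :: L) = mulT P (listProd L) := rfl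

lemma listProd_append_le (L1 L2 : List (TwoSidedIdeal S)) :
    listProd (L1 ++ L2) ≤ mulT (listProd L1) (listProd L2) := by
  induction L1 with
  | nil =>
    intro x hx
    have := mem_mulT_of (A := (⊤ : TwoSidedIdeal S)) (B := listProd ([] ++ L2))
      (a := 1) (b := x) (TwoSidedIdeal.mem_top S) hx
    simpa using this
  | cons P L ih =>
    simp only [List.cons_append, listProd_cons]
    exact le_trans (mulT_mono le_rfl ih) mulT_assoc_le

lemma listProd_map_le {L : List (TwoSidedIdeal S)} {f : TwoSidedIdeal S → TwoSidedIdeal S}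
    (hf : ∀ P ∈ L, f P ≤ P) : listProd (L.map f) ≤ listProd L := by
  induction L with
  | nil => simp
  | cons P L ih =>
    simp only [List.map_cons, listProd_cons]
    exact mulT_mono (hf P (by simp)) (ih fun P hP => hf P (by simp [hP]))

/-- Primeness for two-sided ideals. -/
def IsPrimeT (P : TwoSidedIdeal S) : Prop :=
  P ≠ ⊤ ∧ ∀ a b : S, (∀ r : S, a * r * b ∈ P) → a ∈ P ∨ b ∈ P


lemma tsiStrictMono : StrictMono (TwoSidedIdeal.asIdeal (R := S)) := by
  have hinj : Function.Injective (TwoSidedIdeal.asIdeal (R := S)) := by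
    intro I J h
    refine SetLike.ext fun x => ?_
    rw [← TwoSidedIdeal.mem_asIdeal, ← TwoSidedIdeal.mem_asIdeal, h]
  exact (TwoSidedIdeal.asIdeal.monotone').strictMono_of_injective hinj

instance [IsNoetherianRing S] : WellFoundedGT (TwoSidedIdeal S) :=
  tsiStrictMono.wellFoundedGT

lemma exists_primes [IsNoetherianRing S] (J : TwoSidedIdeal S) :
    ∃ L : List (TwoSidedIdeal S), (∀ P ∈ L, J ≤ P ∧ IsPrimeT P) ∧ listProd L ≤ J := by
  induction J using WellFoundedGT.induction with
  | _ J ih =>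
  by_cases hJtop : J = ⊤
  · exact ⟨[], by simp, by simp [hJtop]⟩
  by_cases hJp : IsPrimeT J
  · refine ⟨[J], fun P hP => by
      simp only [List.mem_singleton] at hP; subst hP; exact ⟨le_rfl, hJp⟩, ?_⟩
    simpa using mulT_le fun a ha b _ => J.mul_mem_right _ _ ha
  · -- J is not prime: find a, b
    have : ∃ a b : S, (∀ r : S, a * r * b ∈ J) ∧ a ∉ J ∧ b ∉ J := by
      rw [IsPrimeT, not_and_or] at hJp
      rcases hJp with h | h
      · exact absurd hJtop (by simpa using h)
      push_neg at h
      obtain ⟨a, b, hab, h2⟩ := h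
      exact ⟨a, b, hab, h2.1, h2.2⟩
    obtain ⟨a, b, hab, haJ, hbJ⟩ := this
    set A : TwoSidedIdeal S := TwoSidedIdeal.mk' {x | ∀ r : S, x * r * b ∈ J}
      (fun r => by simpa using J.zero_mem)
      (fun {x y} hx hy r => by
        have := J.add_mem (hx r) (hy r); rwa [← add_mul, ← add_mul] at this)
      (fun {x} hx r => by
        have := J.neg_mem (hx r); rwa [← neg_mul, ← neg_mul] at this)
      (fun {x y} hy r => by
        have := J.mul_mem_left x _ (hy r)
        rwa [← mul_assoc, ← mul_assoc] at this)
      (fun {x y} hx r => by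
        have := hx (y * r); rwa [← mul_assoc] at this) with hA
    set B : TwoSidedIdeal S := TwoSidedIdeal.mk'
      {y | ∀ x ∈ A, ∀ r : S, x * r * y ∈ J}
      (fun x _ r => by simpa using J.zero_mem)
      (fun {y z} hy hz x hx r => by
        have := J.add_mem (hy x hx r) (hz x hx r); rwa [← mul_add] at this)
      (fun {y} hy x hx r => by
        have := J.neg_mem (hy x hx r); rwa [← mul_neg] at this)
      (fun {y z} hz x hx r => by
        have := hz x hx (r * y)
        rwa [← mul_assoc x r y, mul_assoc (x * r) y z] at this)
      (fun {y z} hy x hx r => by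
        have := J.mul_mem_right _ z (hy x hx r); rwa [mul_assoc] at this) with hB
    have haA : a ∈ A := by rw [hA, TwoSidedIdeal.mem_mk']; exact hab
    have hbB : b ∈ B := by
      rw [hB, TwoSidedIdeal.mem_mk']
      intro x hx r
      rw [hA, TwoSidedIdeal.mem_mk'] at hx
      exact hx r
    have hJA : J < A := by
      refine lt_of_le_not_ge (fun j hj => ?_) (fun h => haJ (h haA))
      rw [hA, TwoSidedIdeal.mem_mk']
      exact fun r => J.mul_mem_right _ _ (J.mul_mem_right _ _ hj)
    have hJB : J < B := by
      refine lt_of_le_not_ge (fun j hj => ?_) (fun h => hbJ (h hbB))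
      rw [hB, TwoSidedIdeal.mem_mk']
      exact fun x _ r => J.mul_mem_left _ _ hj
    obtain ⟨LA, hLA, hLAle⟩ := ih A hJA
    obtain ⟨LB, hLB, hLBle⟩ := ih B hJB
    refine ⟨LA ++ LB, ?_, ?_⟩
    · intro P hP
      rcases List.mem_append.mp hP with h | h
      · exact ⟨le_trans hJA.le (hLA P h).1, (hLA P h).2⟩
      · exact ⟨le_trans hJB.le (hLB P h).1, (hLB P h).2⟩
    · refine le_trans (listProd_append_le LA LB) (mulT_le fun x hx y hy => ?_)
      have hxA : x ∈ A := hLAle hx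
      have hyB : y ∈ B := hLBle hy
      rw [hB, TwoSidedIdeal.mem_mk'] at hyB
      have := hyB x hxA 1
      rwa [mul_one] at this


section Delta

variable (δ : S →+ S)

/-- iterates of `δ` as additive maps -/
def DD : ℕ → S →+ S
  | 0 => AddMonoidHom.id S
  | n + 1 => (DD n).comp δ

@[simp] lemma DD_zero (x : S) : DD δ 0 x = x := rfl

lemma DD_succ (n : ℕ) (x : S) : DD δ (n + 1) x = DD δ n (δ x) := rfl

lemma DD_succ' (n : ℕ) (x : S) : DD δ (n + 1) x = δ (DD δ n x) := by
  induction n generalizing x with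
  | zero => rfl
  | succ n ih => rw [DD_succ, ih, DD_succ]

variable (hLeib : ∀ a b : S, δ (a * b) = a * δ b + δ a * b)
include hLeib

lemma DD_mul (n : ℕ) (x y : S) :
    DD δ n (x * y) = ∑ k ∈ Finset.range (n + 1),
      (n.choose k) • (DD δ k x * DD δ (n - k) y) := by
  induction n generalizing x y with
  | zero => simp
  | succ n ih =>
    rw [DD_succ, hLeib, map_add, ih x (δ y), ih (δ x) y]
    have e1 : ∀ k ∈ Finset.range (n + 1),
        (n.choose k) • (DD δ k x * DD δ (n - k) (δ y)) =
        (n.choose k) • (DD δ k x * DD δ (n + 1 - k) y) := by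
      intro k hk
      rw [Finset.mem_range] at hk
      rw [← DD_succ, Nat.sub_add_comm (by omega)]
    have e2 : ∀ k ∈ Finset.range (n + 1),
        (n.choose k) • (DD δ k (δ x) * DD δ (n - k) y) =
        (n.choose k) • (DD δ (k + 1) x * DD δ (n + 1 - (k + 1)) y) := by
      intro k hk
      rw [← DD_succ]
      simp [Nat.succ_sub_succ]
    rw [Finset.sum_congr rfl e1, Finset.sum_congr rfl e2]
    have hR : ∑ k ∈ Finset.range (n + 1 + 1), ((n + 1).choose k) •
          (DD δ k x * DD δ (n + 1 - k) y)
        = ∑ k ∈ Finset.range (n + 1), (n.choose k) •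
            (DD δ (k + 1) x * DD δ (n + 1 - (k + 1)) y)
          + ∑ k ∈ Finset.range (n + 1), (n.choose (k + 1)) •
            (DD δ (k + 1) x * DD δ (n + 1 - (k + 1)) y)
          + (DD δ 0 x * DD δ (n + 1 - 0) y) := by
      rw [Finset.sum_range_succ' (fun k => ((n + 1).choose k) •
        (DD δ k x * DD δ (n + 1 - k) y)) (n + 1)]
      simp only [Nat.choose_succ_succ, add_smul, Finset.sum_add_distrib,
        Nat.choose_zero_right, one_smul]
    have hS1 : ∑ k ∈ Finset.range (n + 1), (n.choose k) •
          (DD δ k x * DD δ (n + 1 - k) y)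
        = ∑ k ∈ Finset.range (n + 1), (n.choose (k + 1)) •
            (DD δ (k + 1) x * DD δ (n + 1 - (k + 1)) y)
          + (DD δ 0 x * DD δ (n + 1 - 0) y) := by
      rw [Finset.sum_range_succ (fun k => (n.choose (k + 1)) •
          (DD δ (k + 1) x * DD δ (n + 1 - (k + 1)) y)) n,
        Nat.choose_succ_self, zero_smul, add_zero,
        Finset.sum_range_succ' (fun k => (n.choose k) •
          (DD δ k x * DD δ (n + 1 - k) y)) n,
        Nat.choose_zero_right, one_smul]
    rw [hR, hS1]
    abel

lemma nat_smul_cancel [Algebra ℚ S] (P : TwoSidedIdeal S) {C : ℕ} (hC : C ≠ 0)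
    {x : S} (h : C • x ∈ P) : x ∈ P := by
  have e : x = algebraMap ℚ S ((C : ℚ))⁻¹ * (C • x) := by
    rw [← Algebra.smul_def, ← Nat.cast_smul_eq_nsmul ℚ, smul_smul,
      inv_mul_cancel₀ (by exact_mod_cast hC), one_smul]
  rw [e]
  exact P.mul_mem_left _ _ h

/-- the largest `δ`-stable ideal inside `P` -/
def Pinf (P : TwoSidedIdeal S) : TwoSidedIdeal S :=
  TwoSidedIdeal.mk' {s : S | ∀ n : ℕ, DD δ n s ∈ P}
    (fun n => by simp [map_zero])
    (fun {x y} hx hy n => by rw [map_add]; exact P.add_mem (hx n) (hy n))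
    (fun {x} hx n => by rw [map_neg]; exact P.neg_mem (hx n))
    (fun {x y} hy n => by
      rw [DD_mul δ hLeib n x y]
      refine P.finsetSum_mem _ _ fun k _ => ?_
      rw [nsmul_eq_mul]
      exact P.mul_mem_left _ _ (P.mul_mem_left _ _ (hy (n - k))))
    (fun {x y} hx n => by
      rw [DD_mul δ hLeib n x y]
      refine P.finsetSum_mem _ _ fun k _ => ?_
      rw [nsmul_eq_mul]
      exact P.mul_mem_left _ _ (P.mul_mem_right _ _ (hx k)))

lemma mem_Pinf {P : TwoSidedIdeal S} {s : S} :
    s ∈ Pinf δ hLeib P ↔ ∀ n : ℕ, DD δ n s ∈ P := by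
  rw [Pinf, TwoSidedIdeal.mem_mk']; rfl

lemma Pinf_le (P : TwoSidedIdeal S) : Pinf δ hLeib P ≤ P := fun s hs => by
  have := (mem_Pinf δ hLeib).mp hs 0
  simpa using this

lemma Pinf_stable {P : TwoSidedIdeal S} {s : S} (hs : s ∈ Pinf δ hLeib P) :
    δ s ∈ Pinf δ hLeib P := by
  rw [mem_Pinf] at hs ⊢
  intro n
  rw [← DD_succ]
  exact hs (n + 1)

lemma le_Pinf {I P : TwoSidedIdeal S} (hIP : I ≤ P) (hI : ∀ s ∈ I, δ s ∈ I) :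
    I ≤ Pinf δ hLeib P := by
  have key : ∀ n : ℕ, ∀ s ∈ I, DD δ n s ∈ I := by
    intro n
    induction n with
    | zero => intro s hs; simpa using hs
    | succ n ih => intro s hs; rw [DD_succ]; exact ih _ (hI s hs)
  intro s hs
  rw [mem_Pinf]
  exact fun n => hIP (key n s hs)

lemma Pinf_prime [Algebra ℚ S] {P : TwoSidedIdeal S} (hP : IsPrimeT P) :
    IsPrimeT (Pinf δ hLeib P) := by
  constructor
  · intro h
    refine hP.1 (TwoSidedIdeal.eq_top P ?_)
    have : (1 : S) ∈ Pinf δ hLeib P := h ▸ TwoSidedIdeal.mem_top S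
    exact Pinf_le δ hLeib P this
  intro a b hab
  by_contra hcon
  push_neg at hcon
  obtain ⟨ha, hb⟩ := hcon
  rw [mem_Pinf] at ha hb
  push_neg at ha hb
  have hma : ∃ m, DD δ m a ∉ P := ha
  have hnb : ∃ n, DD δ n b ∉ P := hb
  classical
  set m := Nat.find hma with hm
  set n := Nat.find hnb with hn
  have hma' : DD δ m a ∉ P := Nat.find_spec hma
  have hnb' : DD δ n b ∉ P := Nat.find_spec hnb
  have hma_lt : ∀ k < m, DD δ k a ∈ P := fun k hk => by
    by_contra h; exact (Nat.find_min hma hk) h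
  have hnb_lt : ∀ k < n, DD δ k b ∈ P := fun k hk => by
    by_contra h; exact (Nat.find_min hnb hk) h
  -- P prime gives r with DD m a * r * DD n b ∉ P
  have : ∃ r : S, DD δ m a * r * DD δ n b ∉ P := by
    by_contra h
    push_neg at h
    rcases hP.2 _ _ h with h' | h'
    · exact hma' h'
    · exact hnb' h'
  obtain ⟨r, hr⟩ := this
  -- key fact: for j < n, DD j (r' * b) ∈ P
  have hrb : ∀ (r' : S) (j : ℕ), j < n → DD δ j (r' * b) ∈ P := by
    intro r' j hj
    rw [DD_mul δ hLeib]
    refine P.finsetSum_mem _ _ fun i hi => ?_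
    rw [nsmul_eq_mul]
    exact P.mul_mem_left _ _ (P.mul_mem_left _ _ (hnb_lt _ (by omega)))
  -- the element a * r * b is in Pinf P by hypothesis
  have habP : DD δ (m + n) (a * (r * b)) ∈ P := by
    have := (mem_Pinf δ hLeib).mp (hab r) (m + n)
    rwa [mul_assoc] at this
  rw [DD_mul δ hLeib] at habP
  -- all terms except k = m are in P
  have hterm : ∀ k ∈ Finset.range (m + n + 1), k ≠ m →
      ((m + n).choose k) • (DD δ k a * DD δ (m + n - k) (r * b)) ∈ P := by
    intro k hk hkm
    rw [nsmul_eq_mul]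
    rcases lt_or_gt_of_ne hkm with h | h
    · exact P.mul_mem_left _ _ (P.mul_mem_right _ _ (hma_lt _ h))
    · rw [Finset.mem_range] at hk
      exact P.mul_mem_left _ _ (P.mul_mem_left _ _ (hrb r _ (by omega)))
  -- extract the k = m term
  have hmem : m ∈ Finset.range (m + n + 1) := by simp
  rw [← Finset.add_sum_erase _ _ hmem] at habP
  have hrest : ∑ k ∈ (Finset.range (m + n + 1)).erase m,
      ((m + n).choose k) • (DD δ k a * DD δ (m + n - k) (r * b)) ∈ P := by
    refine P.finsetSum_mem _ _ fun k hk => ?_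
    exact hterm k (Finset.mem_of_mem_erase hk) (Finset.ne_of_mem_erase hk)
  have hmterm : ((m + n).choose m) • (DD δ m a * DD δ (m + n - m) (r * b)) ∈ P := by
    have := P.sub_mem habP hrest
    simpa using this
  have hchoose : (m + n).choose m ≠ 0 := (Nat.choose_pos (Nat.le_add_right m n)).ne'
  have h1 : DD δ m a * DD δ n (r * b) ∈ P := by
    have := nat_smul_cancel δ hLeib P hchoose hmterm
    rwa [Nat.add_sub_cancel_left] at this
  have hexp : DD δ n (r * b) = ∑ i ∈ Finset.range n,
      (n.choose (i + 1)) • (DD δ (i + 1) r * DD δ (n - (i + 1)) b) + r * DD δ n b := by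
    rw [DD_mul δ hLeib, Finset.sum_range_succ' (fun i => (n.choose i) •
      (DD δ i r * DD δ (n - i) b)) n]
    simp only [Nat.choose_zero_right, one_smul, DD_zero, Nat.sub_zero]
  have h2 : DD δ m a * (∑ i ∈ Finset.range n,
      (n.choose (i + 1)) • (DD δ (i + 1) r * DD δ (n - (i + 1)) b)) ∈ P := by
    refine P.mul_mem_left _ _ (P.finsetSum_mem _ _ fun i hi => ?_)
    rw [Finset.mem_range] at hi
    rw [nsmul_eq_mul]
    exact P.mul_mem_left _ _ (P.mul_mem_left _ _ (hnb_lt _ (by omega)))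
  rw [hexp, mul_add] at h1
  have h3 := P.sub_mem h1 h2
  rw [add_sub_cancel_left] at h3
  rw [← mul_assoc] at h3
  exact hr h3

lemma mulT_stable {A B : TwoSidedIdeal S}
    (hA : ∀ s ∈ A, δ s ∈ A) (hB : ∀ s ∈ B, δ s ∈ B) :
    ∀ s ∈ mulT A B, δ s ∈ mulT A B := by
  intro s hs
  rw [mulT, TwoSidedIdeal.mem_mk'] at hs ⊢
  refine AddSubgroup.closure_induction (fun z hz => ?_)
    (by rw [map_zero]; exact AddSubgroup.zero_mem _)
    (fun z w _ _ hz hw => by rw [map_add]; exact AddSubgroup.add_mem _ hz hw)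
    (fun z _ hz => by rw [map_neg]; exact AddSubgroup.neg_mem _ hz) hs
  obtain ⟨x, hx, y, hy, rfl⟩ := hz
  rw [hLeib]
  exact AddSubgroup.add_mem _
    (AddSubgroup.subset_closure ⟨x, hx, δ y, hB y hy, rfl⟩)
    (AddSubgroup.subset_closure ⟨δ x, hA x hx, y, hy, rfl⟩)

lemma listProd_stable {L : List (TwoSidedIdeal S)}
    (hL : ∀ P ∈ L, ∀ s ∈ P, δ s ∈ P) :
    ∀ s ∈ listProd L, δ s ∈ listProd L := by
  induction L with
  | nil => intro s _; exact TwoSidedIdeal.mem_top S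
  | cons P L ih =>
    rw [listProd_cons]
    exact mulT_stable δ hLeib (hL P (by simp))
      (ih fun P' hP' => hL P' (by simp [hP']))

end Delta

end ContractionAux

open ContractionAux

/-- Let `S` be a noetherian ℚ-algebra, `δ` a derivation of `S`, and
`T = S[v;δ]` the differential operator ring (encoded by `ι : S →+* T` and `v` with
`v·ιs = ιs·v + ι(δs)`, `T` free as a left `S`-module on the powers of `v`).
Then for any prime (two-sided) ideal `Q` of `T`, the contraction `Q ∩ S` is a
`δ`-invariant prime ideal of `S`. -/
theorem contraction_of_prime_in_diff_op_ring {S : Type*} [Ring S] [Algebra ℚ S]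
    [IsNoetherianRing S]
    (δ : S →+ S) (hLeib : ∀ a b : S, δ (a * b) = a * δ b + δ a * b)
    (T : Type*) [Ring T] (ι : S →+* T) (hι : Function.Injective ι)
    (v : T) (hOre : ∀ s : S, v * ι s = ι s * v + ι (δ s))
    (hFree : ∀ t : T, ∃! f : ℕ →₀ S, t = f.sum fun n s => ι s * v ^ n)
    (Q : TwoSidedIdeal T) (hQproper : Q ≠ ⊤)
    (hQprime : ∀ a b : T, (∀ r : T, a * r * b ∈ Q) → a ∈ Q ∨ b ∈ Q) :
    (∀ s : S, ι s ∈ Q → ι (δ s) ∈ Q) ∧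
    (∃ s : S, ι s ∉ Q) ∧
    (∀ a b : S, (∀ r : S, ι (a * r * b) ∈ Q) → ι a ∈ Q ∨ ι b ∈ Q) := by
  classical
  have part1 : ∀ s : S, ι s ∈ Q → ι (δ s) ∈ Q := by
    intro s hs
    have h1 : v * ι s ∈ Q := Q.mul_mem_left v _ hs
    have h2 : ι s * v ∈ Q := Q.mul_mem_right _ v hs
    have := Q.sub_mem h1 h2
    rwa [hOre s, add_sub_cancel_left] at this
  have part2 : ∃ s : S, ι s ∉ Q := by
    refine ⟨1, fun h => hQproper (TwoSidedIdeal.eq_top Q ?_)⟩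
    rwa [map_one] at h
  refine ⟨part1, part2, ?_⟩
  intro a b hab
  -- the contraction ideal
  set I : TwoSidedIdeal S := TwoSidedIdeal.mk' {s : S | ι s ∈ Q}
    (by show ι 0 ∈ Q; rw [map_zero]; exact Q.zero_mem)
    (fun {x y} hx hy => by show ι (x + y) ∈ Q; rw [map_add]; exact Q.add_mem hx hy)
    (fun {x} hx => by show ι (-x) ∈ Q; rw [map_neg]; exact Q.neg_mem hx)
    (fun {x y} hy => by show ι (x * y) ∈ Q; rw [map_mul]; exact Q.mul_mem_left _ _ hy)
    (fun {x y} hx => by show ι (x * y) ∈ Q; rw [map_mul]; exact Q.mul_mem_right _ _ hx)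
    with hIdef
  have hI_mem : ∀ s : S, s ∈ I ↔ ι s ∈ Q := by
    intro s; rw [hIdef, TwoSidedIdeal.mem_mk']; rfl
  have hIstable : ∀ s ∈ I, δ s ∈ I := by
    intro s hs
    rw [hI_mem] at hs ⊢
    exact part1 s hs
  have hInetop : I ≠ ⊤ := by
    intro h
    have : (1 : S) ∈ I := h ▸ TwoSidedIdeal.mem_top S
    rw [hI_mem, map_one] at this
    exact hQproper (TwoSidedIdeal.eq_top Q this)
  -- δ-primeness of I, via primeness of Q
  have hdp : ∀ A B : TwoSidedIdeal S, (∀ s ∈ B, δ s ∈ B) →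
      (∀ x ∈ A, ∀ y ∈ B, x * y ∈ I) → A ≤ I ∨ B ≤ I := by
    intro A B hBs hAB
    by_contra hc
    push_neg at hc
    have hc1 : ¬((A : Set S) ⊆ (I : Set S)) := by
      rw [← TwoSidedIdeal.le_iff]; exact hc.1
    have hc2 : ¬((B : Set S) ⊆ (I : Set S)) := by
      rw [← TwoSidedIdeal.le_iff]; exact hc.2
    obtain ⟨a₀, ha₀A, ha₀I⟩ := Set.not_subset.mp hc1
    obtain ⟨b₀, hb₀B, hb₀I⟩ := Set.not_subset.mp hc2
    have key : ∀ (n : ℕ) (x : S), x ∈ B → ∀ c : T,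
        (∀ y ∈ B, c * ι y ∈ Q) → c * (v ^ n * ι x) ∈ Q := by
      intro n
      induction n with
      | zero => intro x hx c hc; rw [pow_zero, one_mul]; exact hc x hx
      | succ n ih =>
        intro x hx c hc
        have e : v ^ (n + 1) * ι x = v ^ n * (ι x * v) + v ^ n * ι (δ x) := by
          rw [pow_succ, mul_assoc, hOre x, mul_add]
        rw [e, mul_add]
        refine Q.add_mem ?_ (ih (δ x) (hBs x hx) c hc)
        have e2 : c * (v ^ n * (ι x * v)) = (c * (v ^ n * ι x)) * v := by
          simp only [mul_assoc]
        rw [e2]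
        exact Q.mul_mem_right _ v (ih x hx c hc)
    have main : ∀ t : T, ι a₀ * t * ι b₀ ∈ Q := by
      intro t
      obtain ⟨f, hf, -⟩ := hFree t
      rw [hf, Finsupp.sum, Finset.mul_sum, Finset.sum_mul]
      refine Q.finsetSum_mem _ _ fun n _ => ?_
      have e : ι a₀ * (ι (f n) * v ^ n) * ι b₀
          = (ι a₀ * ι (f n)) * (v ^ n * ι b₀) := by
        simp only [mul_assoc]
      rw [e]
      refine key n b₀ hb₀B (ι a₀ * ι (f n)) ?_
      intro y hy
      rw [← map_mul, ← map_mul]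
      have : a₀ * (f n * y) ∈ I := hAB a₀ ha₀A _ (B.mul_mem_left _ _ hy)
      rw [← mul_assoc] at this
      exact (hI_mem _).mp this
    rcases hQprime (ι a₀) (ι b₀) main with h | h
    · exact ha₀I ((hI_mem a₀).mpr h)
    · exact hb₀I ((hI_mem b₀).mpr h)
  -- get a list of primes over I whose product is inside I
  obtain ⟨L, hL, hLle⟩ := exists_primes I
  set L' : List (TwoSidedIdeal S) := L.map (Pinf δ hLeib) with hL'def
  have hL'le : listProd L' ≤ I :=
    le_trans (listProd_map_le fun P _ => Pinf_le δ hLeib P) hLle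
  have hL'stable : ∀ P' ∈ L', ∀ s ∈ P', δ s ∈ P' := by
    intro P' hP'
    rw [hL'def, List.mem_map] at hP'
    obtain ⟨P, _, rfl⟩ := hP'
    exact fun s hs => Pinf_stable δ hLeib hs
  have hL'sub : ∀ P' ∈ L', I ≤ P' := by
    intro P' hP'
    rw [hL'def, List.mem_map] at hP'
    obtain ⟨P, hP, rfl⟩ := hP'
    exact le_Pinf δ hLeib (hL P hP).1 hIstable
  have hL'prime : ∀ P' ∈ L', IsPrimeT P' := by
    intro P' hP'
    rw [hL'def, List.mem_map] at hP'
    obtain ⟨P, hP, rfl⟩ := hP'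
    exact Pinf_prime δ hLeib (hL P hP).2
  -- one of the primes is contained in I
  have hsome : ∀ M : List (TwoSidedIdeal S), (∀ P ∈ M, ∀ s ∈ P, δ s ∈ P) →
      listProd M ≤ I → ∃ P ∈ M, P ≤ I := by
    intro M
    induction M with
    | nil =>
      intro _ h
      exact absurd (TwoSidedIdeal.eq_top I (h (TwoSidedIdeal.mem_top S))) hInetop
    | cons P M ih =>
      intro hst h
      rw [listProd_cons] at h
      have hMstable : ∀ s ∈ listProd M, δ s ∈ listProd M :=
        listProd_stable δ hLeib fun P' hP' => hst P' (by simp [hP'])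
      rcases hdp P (listProd M) hMstable
          (fun x hx y hy => h (mem_mulT_of hx hy)) with h' | h'
      · exact ⟨P, by simp, h'⟩
      · obtain ⟨P', hP', hle⟩ := ih (fun P' hP' => hst P' (by simp [hP'])) h'
        exact ⟨P', by simp [hP'], hle⟩
  obtain ⟨P₀, hP₀mem, hP₀le⟩ := hsome L' hL'stable hL'le
  have hIP₀ : I = P₀ := le_antisymm (hL'sub P₀ hP₀mem) hP₀le
  have hIprime : IsPrimeT I := hIP₀ ▸ hL'prime P₀ hP₀mem
  rcases hIprime.2 a b (fun r => (hI_mem _).mpr (hab r)) with h | h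
  · exact Or.inl ((hI_mem a).mp h)
  · exact Or.inr ((hI_mem b).mp h)
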